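/- arXiv:1401.3073 — 2 statements merged into one kernel-verified Lean document; each statement's English description precedes it below -/
import Mathlib

section
/- Fix k ≥ 0 and let δ_i be the left divided difference operator on R_∞. For i > 0, the Leibniz-type identity δ_i(ϑ_r^{(i)}·ϑ_s^{(-i)}) = ϑ_{r-1}^{(i-1)}·ϑ_s^{(-i-1)} + ϑ_r^{(i-1)}·ϑ_{s-1}^{(-i-1)} holds. -/
/-!
Statement 5: Fix `k ≥ 0` and let `δ_i` be the left divided difference operator on `R_∞`.
For `i > 0`, the Leibniz-type identity
`δ_i(ϑ_r^{(i)}·ϑ_s^{(-i)}) = ϑ_{r-1}^{(i-1)}·ϑ_s^{(-i-1)} + ϑ_r^{(i-1)}·ϑ_{s-1}^{(-i-1)}`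
holds.

We realize the theta polynomials by their generating functions, universally over every
commutative ring, every number `N` of (possibly nonzero) `x`-variables and all values of the
variables (0-indexed: `x i, z i, t i` stand for `x_{i+1}, z_{i+1}, t_{i+1}`).  For `i ≥ 1` the
action `s_i^t` swaps `t_i` and `t_{i+1}`, and `δ_i f = (f − s_i^t f)/α_i` with
`α_i = t_{i+1} − t_i`.  Since `α_i` is a regular element of the generic polynomial ring, the
claim `δ_i(F) = G` is equivalent to the multiplied form `F − s_i^t F = α_i · G`, which is how
we state it. -/

open Finset

noncomputable section

variable {R : Type*} [CommRing R]

/-- The power series `(1 - a u)⁻¹ = ∑_n aⁿ uⁿ`. -/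
def geomSeries (a : R) : PowerSeries R := PowerSeries.mk fun n => a ^ n

/-- The generating function `f_l(u)` of the double theta polynomials `_kϑ_r^{(l)}`. -/
def thetaGF (k N : ℕ) (x z t : ℕ → R) (l : ℤ) : PowerSeries R :=
  (∏ i ∈ range N, ((1 + PowerSeries.C (x i) * PowerSeries.X) * geomSeries (x i))) *
    (∏ i ∈ range k, (1 + PowerSeries.C (z i) * PowerSeries.X)) *
    (if 0 ≤ l then ∏ i ∈ range l.toNat, (1 - PowerSeries.C (t i) * PowerSeries.X)
     else ∏ i ∈ range (-l).toNat, geomSeries (-(t i)))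

/-- The double theta polynomial `_kϑ_r^{(l)}(x,z|t)`; it vanishes for `r < 0`. -/
def theta (k N : ℕ) (x z t : ℕ → R) (l r : ℤ) : R :=
  if r < 0 then 0 else PowerSeries.coeff r.toNat (thetaGF k N x z t l)

lemma geom_mul (a : R) :
    geomSeries a * (1 - PowerSeries.C a * PowerSeries.X) = 1 := by
  ext n
  cases n with
  | zero => simp [geomSeries]
  | succ n =>
    rw [mul_sub, mul_one, mul_comm (PowerSeries.C a), ← mul_assoc]
    simp [PowerSeries.coeff_succ_mul_X, geomSeries, pow_succ, mul_comm]

lemma geom_mul' (a : R) :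
    geomSeries (-a) * (1 + PowerSeries.C a * PowerSeries.X) = 1 := by
  have := geom_mul (-a)
  simpa [sub_eq_add_neg] using this

def thc (F : PowerSeries R) (r : ℤ) : R :=
  if r < 0 then 0 else PowerSeries.coeff r.toNat F

lemma theta_eq_thc (k N : ℕ) (x z t : ℕ → R) (l r : ℤ) :
    theta k N x z t l r = thc (thetaGF k N x z t l) r := rfl

lemma thc_mul (F : PowerSeries R) (a : R) (r : ℤ) :
    thc (F * (1 + PowerSeries.C a * PowerSeries.X)) r = thc F r + a * thc F (r - 1) := by
  rcases lt_trichotomy r 0 with h | h | h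
  · have h' : r - 1 < 0 := by omega
    simp [thc, h, h']
  · subst h
    simp [thc, PowerSeries.coeff_zero_eq_constantCoeff]
  · have h0 : ¬ r < 0 := by omega
    have h1 : ¬ r - 1 < 0 := by omega
    obtain ⟨n, hn⟩ : ∃ n : ℕ, r.toNat = n + 1 := ⟨r.toNat - 1, by omega⟩
    have hn1 : (r - 1).toNat = n := by omega
    simp only [thc, if_neg h0, if_neg h1, hn, hn1, mul_add, mul_one, map_add]
    rw [mul_comm (PowerSeries.C a), ← mul_assoc, PowerSeries.coeff_mul_C,
      PowerSeries.coeff_succ_mul_X]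
    ring

variable (k N : ℕ) (x z : ℕ → R)

lemma swap_prod_eq (t : ℕ → R) (m : ℕ) (f : R → PowerSeries R) :
    ∏ j ∈ range m, f ((t ∘ Equiv.swap m (m + 1)) j) = ∏ j ∈ range m, f (t j) := by
  refine prod_congr rfl fun j hj => ?_
  simp only [mem_range] at hj
  simp [Function.comp, Equiv.swap_apply_of_ne_of_ne (by omega : j ≠ m) (by omega : j ≠ m + 1)]

lemma GF1 (t : ℕ → R) (m : ℕ) :
    thetaGF k N x z t ((m : ℤ) + 1)
      = thetaGF k N x z t (m : ℤ) * (1 + PowerSeries.C (-(t m)) * PowerSeries.X) := by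
  simp only [thetaGF, if_pos (by positivity : (0:ℤ) ≤ (m:ℤ)),
    if_pos (by positivity : (0:ℤ) ≤ (m:ℤ)+1)]
  have h : ((m : ℤ) + 1).toNat = m + 1 := by omega
  rw [h, Int.toNat_natCast, prod_range_succ, map_neg]
  ring

lemma GF2 (t : ℕ → R) (m : ℕ) :
    thetaGF k N x z (t ∘ Equiv.swap m (m + 1)) ((m : ℤ) + 1)
      = thetaGF k N x z t (m : ℤ) * (1 + PowerSeries.C (-(t (m + 1))) * PowerSeries.X) := by
  simp only [thetaGF, if_pos (by positivity : (0:ℤ) ≤ (m:ℤ)),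
    if_pos (by positivity : (0:ℤ) ≤ (m:ℤ)+1)]
  have h : ((m : ℤ) + 1).toNat = m + 1 := by omega
  rw [h, Int.toNat_natCast, prod_range_succ,
    swap_prod_eq t m (fun a => 1 - PowerSeries.C a * PowerSeries.X)]
  simp only [Function.comp_apply, Equiv.swap_apply_left, map_neg]
  ring

lemma GF3 (t : ℕ → R) (m : ℕ) :
    thetaGF k N x z t (-((m : ℤ) + 1))
      = thetaGF k N x z t (-((m : ℤ) + 1) - 1)
          * (1 + PowerSeries.C (t (m + 1)) * PowerSeries.X) := by
  simp only [thetaGF, if_neg (by omega : ¬ (0:ℤ) ≤ -((m:ℤ)+1)),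
    if_neg (by omega : ¬ (0:ℤ) ≤ -((m:ℤ)+1)-1)]
  have h1 : (-(-((m : ℤ) + 1))).toNat = m + 1 := by omega
  have h2 : (-(-((m : ℤ) + 1) - 1)).toNat = m + 2 := by omega
  rw [h1, h2, prod_range_succ (n := m + 1)]
  linear_combination
    (-((∏ i ∈ range N, ((1 + PowerSeries.C (x i) * PowerSeries.X) * geomSeries (x i))) *
        (∏ i ∈ range k, (1 + PowerSeries.C (z i) * PowerSeries.X)) *
        (∏ j ∈ range (m + 1), geomSeries (-(t j))))) * geom_mul' (t (m + 1))

lemma GF4 (t : ℕ → R) (m : ℕ) :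
    thetaGF k N x z (t ∘ Equiv.swap m (m + 1)) (-((m : ℤ) + 1))
      = thetaGF k N x z t (-((m : ℤ) + 1) - 1)
          * (1 + PowerSeries.C (t m) * PowerSeries.X) := by
  simp only [thetaGF, if_neg (by omega : ¬ (0:ℤ) ≤ -((m:ℤ)+1)),
    if_neg (by omega : ¬ (0:ℤ) ≤ -((m:ℤ)+1)-1)]
  have h1 : (-(-((m : ℤ) + 1))).toNat = m + 1 := by omega
  have h2 : (-(-((m : ℤ) + 1) - 1)).toNat = m + 2 := by omega
  rw [h1, h2, prod_range_succ (f := fun j => geomSeries (-(t j))) (n := m + 1),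
    prod_range_succ (f := fun j => geomSeries (-(t j))) (n := m),
    prod_range_succ (f := fun j => geomSeries (-((t ∘ Equiv.swap m (m + 1)) j))) (n := m),
    swap_prod_eq t m (fun a => geomSeries (-a))]
  simp only [Function.comp_apply, Equiv.swap_apply_left]
  linear_combination
    (-((∏ i ∈ range N, ((1 + PowerSeries.C (x i) * PowerSeries.X) * geomSeries (x i))) *
        (∏ i ∈ range k, (1 + PowerSeries.C (z i) * PowerSeries.X)) *
        (∏ j ∈ range m, geomSeries (-(t j))) * geomSeries (-(t (m + 1))))) * geom_mul' (t m)

/-- Lemma 5.6 of Ikeda–Matsumura: the Leibniz-type identity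
`δ_i(ϑ_r^{(i)}·ϑ_s^{(-i)}) = ϑ_{r-1}^{(i-1)}·ϑ_s^{(-i-1)} + ϑ_r^{(i-1)}·ϑ_{s-1}^{(-i-1)}`
for `i > 0`, in the multiplied form `F − s_i^t F = α_i · G` (where `s_i^t` swaps `t_i,t_{i+1}`,
i.e. the 0-indexed entries `i-1` and `i` of the sequence `t`). -/
theorem delta_leibniz_theta (k N : ℕ) (x z t : ℕ → R) (i : ℕ) (hi : 0 < i) (r s : ℤ) :
    theta k N x z t i r * theta k N x z t (-(i : ℤ)) s
        - theta k N x z (t ∘ Equiv.swap (i - 1) i) i r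
            * theta k N x z (t ∘ Equiv.swap (i - 1) i) (-(i : ℤ)) s
      = (t i - t (i - 1)) *
          (theta k N x z t ((i : ℤ) - 1) (r - 1) * theta k N x z t (-(i : ℤ) - 1) s
            + theta k N x z t ((i : ℤ) - 1) r * theta k N x z t (-(i : ℤ) - 1) (s - 1)) := by
  obtain ⟨m, rfl⟩ : ∃ m, i = m + 1 := ⟨i - 1, by omega⟩
  have e1 : ((m + 1 : ℕ) : ℤ) = (m : ℤ) + 1 := by push_cast; ring
  have e2 : ((m + 1 : ℕ) : ℤ) - 1 = (m : ℤ) := by push_cast; ring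
  have e3 : m + 1 - 1 = m := rfl
  simp only [theta_eq_thc, e1, e2, e3]
  rw [GF1, GF2, GF3, GF4, thc_mul, thc_mul, thc_mul, thc_mul]
  ring

end
end

section
/- Let c^{(1)},...,c^{(m)} be infinite sequences of commuting variables. Suppose for a fixed index l (occupying two adjacent positions) that Pf[c_r^{(l)} c_s^{(l)}] + Pf[c_s^{(l)} c_r^{(l)}] = 0. Then for any superscript/subscript data, Pf[c_{r_1}^{(l_1)}⋯c_r^{(l)}c_s^{(l)}⋯c_{r_m}^{(l_m)}] + Pf[c_{r_1}^{(l_1)}⋯c_s^{(l)}c_r^{(l)}⋯c_{r_m}^{(l_m)}] = 0. -/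
/-!
Statement 8 (Proposition 4.1(2) of Ikeda–Matsumura, after Kazarian): if for a fixed sequence
`c^{(l)}` and degrees `r, s` one has `Pf[c_r^{(l)} c_s^{(l)}] + Pf[c_s^{(l)} c_r^{(l)}] = 0`,
then for any surrounding entries
`Pf[c_{r_1}^{(l_1)} ⋯ c_r^{(l)} c_s^{(l)} ⋯ c_{r_m}^{(l_m)}]
 + Pf[c_{r_1}^{(l_1)} ⋯ c_s^{(l)} c_r^{(l)} ⋯ c_{r_m}^{(l_m)}] = 0`.

The multi Schur-Pfaffian is defined by the recursion of Section 4 of the paper; an entry is a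
pair (infinite sequence indexed by ℤ, degree).  We state the implication for arbitrary
sequences of elements of an arbitrary commutative ring, which includes the generic
(polynomial-ring) case. -/

open Finset

noncomputable section

variable {R : Type*} [CommRing R]

/-- The two-entry multi Schur-Pfaffian
`Pf[c_r d_s] = c_r d_s + 2 ∑_{j=1}^{s} (−1)^j c_{r+j} d_{s−j}` (the sum being empty if
`s < 0`). -/
def pf2 (c d : ℤ → R) (r s : ℤ) : R :=
  c r * d s + 2 * ∑ j ∈ range s.toNat, (-1 : R) ^ (j + 1) * c (r + (j + 1)) * d (s - (j + 1))

/-- Auxiliary fuel-based definition of the multi Schur-Pfaffian of a list of entries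
(sequence, degree). -/
def pfAux : ℕ → List ((ℤ → R) × ℤ) → R
  | _, [] => 1
  | _, [e] => e.1 e.2
  | _, [e, f] => pf2 e.1 f.1 e.2 f.2
  | 0, _ => 0
  | n + 1, e :: l =>
    if (l.length + 1) % 2 = 0 then
      -- even length: expand along the first entry
      ∑ j : Fin l.length,
        (-1 : R) ^ (j : ℕ) * pf2 e.1 (l.get j).1 e.2 (l.get j).2 * pfAux n (l.eraseIdx j)
    else
      -- odd length: expand removing one entry at a time
      ∑ j : Fin (l.length + 1),
        (-1 : R) ^ (j : ℕ) * ((e :: l).get j).1 ((e :: l).get j).2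
          * pfAux n ((e :: l).eraseIdx j)

/-- The multi Schur-Pfaffian `Pf[c_{r_1}^{(1)} ⋯ c_{r_m}^{(m)}]` of a list of `m` entries. -/
def pfaffian (L : List ((ℤ → R) × ℤ)) : R := pfAux L.length L

/-- unfolding of `pfAux` at fuel `n+1` on a list of length `≥ 3`. -/
lemma pfAux_succ (n : ℕ) (e a b : (ℤ → R) × ℤ) (l : List ((ℤ → R) × ℤ)) :
    pfAux (n+1) (e :: a :: b :: l) =
    if ((a :: b :: l).length + 1) % 2 = 0 then
      ∑ j : Fin (a :: b :: l).length,
        (-1 : R) ^ (j : ℕ) * pf2 e.1 ((a :: b :: l).get j).1 e.2 ((a :: b :: l).get j).2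
          * pfAux n ((a :: b :: l).eraseIdx j)
    else
      ∑ j : Fin ((a :: b :: l).length + 1),
        (-1 : R) ^ (j : ℕ) * ((e :: a :: b :: l).get j).1 ((e :: a :: b :: l).get j).2
          * pfAux n ((e :: a :: b :: l).eraseIdx j) := rfl

lemma pfAux_eq_pfaffian : ∀ (n : ℕ) (L : List ((ℤ → R) × ℤ)), L.length ≤ n →
    pfAux n L = pfaffian L := by
  intro n
  induction n using Nat.strong_induction_on with
  | _ n ih =>
    intro L hL
    match L with
    | [] => cases n <;> rfl
    | [e] => cases n <;> rfl
    | [e, f] => cases n <;> rfl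
    | e :: a :: b :: l =>
      simp only [List.length_cons] at hL
      obtain ⟨n', rfl⟩ : ∃ n', n = n' + 1 := ⟨n - 1, by omega⟩
      show pfAux (n' + 1) (e :: a :: b :: l) = pfAux (l.length + 2 + 1) (e :: a :: b :: l)
      rw [pfAux_succ, pfAux_succ]
      split
      · refine Finset.sum_congr rfl fun j _ => ?_
        have h1 : ((a :: b :: l).eraseIdx j).length ≤ l.length + 1 := by
          have hj := j.isLt
          simp only [List.length_cons] at hj
          rw [List.length_eraseIdx]; simp only [List.length_cons]; split <;> omega
        rw [ih n' (by omega) _ (by omega),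
            ih (l.length + 2) (by omega) _ (by omega)]
      · refine Finset.sum_congr rfl fun j _ => ?_
        have h1 : ((e :: a :: b :: l).eraseIdx j).length ≤ l.length + 2 := by
          have hj := j.isLt
          simp only [List.length_cons] at hj
          rw [List.length_eraseIdx]; simp only [List.length_cons]; split <;> omega
        rw [ih n' (by omega) _ (by omega),
            ih (l.length + 2) (by omega) _ (by omega)]

/-- `j`-th entry of a list of entries, with a junk default. -/
def nth (L : List ((ℤ → R) × ℤ)) (j : ℕ) : (ℤ → R) × ℤ := L.getD j (fun _ => 0, 0)

lemma nth_append_left (X Y : List ((ℤ → R) × ℤ)) (j : ℕ) (h : j < X.length) :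
    nth (X ++ Y) j = nth X j := List.getD_append X Y _ j h

lemma nth_append_right (X Y : List ((ℤ → R) × ℤ)) (j : ℕ) (h : X.length ≤ j) :
    nth (X ++ Y) j = nth Y (j - X.length) := List.getD_append_right X Y _ j h

lemma nth_cons_zero (a : (ℤ → R) × ℤ) (l : List ((ℤ → R) × ℤ)) : nth (a :: l) 0 = a := rfl

lemma nth_cons_succ (a : (ℤ → R) × ℤ) (l : List ((ℤ → R) × ℤ)) (j : ℕ) :
    nth (a :: l) (j + 1) = nth l j := rfl

lemma nth_eraseIdx (l : List ((ℤ → R) × ℤ)) (j i : ℕ) (h : i + 1 < l.length) :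
    nth (l.eraseIdx j) i = if i < j then nth l i else nth l (i + 1) := by
  have h1 : i < (l.eraseIdx j).length := by rw [List.length_eraseIdx]; split <;> omega
  rw [nth, List.getD_eq_getElem _ _ h1, List.getElem_eraseIdx]
  split
  · rw [nth, List.getD_eq_getElem _ _ (by omega)]
  · rw [nth, List.getD_eq_getElem _ _ (by omega)]

lemma eraseIdx_eraseIdx {α : Type*} :
    ∀ (l : List α) (i j : ℕ), i ≤ j →
      (l.eraseIdx i).eraseIdx j = (l.eraseIdx (j + 1)).eraseIdx i := by
  intro l
  induction l with
  | nil => intro i j _; simp [List.eraseIdx]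
  | cons x t ih =>
    intro i j hij
    cases i with
    | zero => cases j <;> simp [List.eraseIdx]
    | succ i' =>
      cases j with
      | zero => omega
      | succ j' => simp only [List.eraseIdx_cons_succ, List.eraseIdx_cons_succ]
                   rw [ih i' j' (by omega)]

/-- even-length expansion along the first entry, `range` form. -/
lemma pf_even (e : (ℤ → R) × ℤ) (N : List ((ℤ → R) × ℤ)) (hN : N.length % 2 = 1) :
    pfaffian (e :: N) = ∑ j ∈ range N.length,
      (-1:R)^j * pf2 e.1 (nth N j).1 e.2 (nth N j).2 * pfaffian (N.eraseIdx j) := by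
  match N with
  | [] => simp at hN
  | [f] =>
    show pf2 e.1 f.1 e.2 f.2 = _
    simp [nth, pfaffian, pfAux]
  | a :: b :: l =>
    show pfAux (l.length + 3) _ = _
    rw [pfAux_succ]
    rw [if_pos (by simp only [List.length_cons] at hN ⊢; omega)]
    rw [← Fin.sum_univ_eq_sum_range (fun j => (-1:R)^j * pf2 e.1 (nth (a::b::l) j).1 e.2
      (nth (a::b::l) j).2 * pfaffian ((a::b::l).eraseIdx j))]
    refine Finset.sum_congr rfl fun j _ => ?_
    have hj : (j : ℕ) < (a::b::l).length := j.isLt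
    have hj' := hj; simp only [List.length_cons] at hj'
    have h1 : ((a :: b :: l).eraseIdx j).length ≤ l.length + 2 := by
      rw [List.length_eraseIdx]; simp only [List.length_cons]; split <;> omega
    rw [pfAux_eq_pfaffian _ _ h1, List.get_eq_getElem, nth,
      List.getD_eq_getElem _ _ hj]

/-- odd-length (≥ 3) expansion, `range` form. -/
lemma pf_odd (L : List ((ℤ → R) × ℤ)) (h1 : L.length % 2 = 1) (h3 : 3 ≤ L.length) :
    pfaffian L = ∑ j ∈ range L.length,
      (-1:R)^j * (nth L j).1 (nth L j).2 * pfaffian (L.eraseIdx j) := by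
  match L with
  | [] => simp at h3
  | [e] => simp at h3
  | [e, f] => simp at h3
  | e :: a :: b :: l =>
    show pfAux (l.length + 3) _ = _
    rw [pfAux_succ]
    rw [if_neg (by simp only [List.length_cons] at h1 ⊢; omega)]
    rw [← Fin.sum_univ_eq_sum_range (fun j => (-1:R)^j * (nth (e::a::b::l) j).1
      (nth (e::a::b::l) j).2 * pfaffian ((e::a::b::l).eraseIdx j))]
    refine Finset.sum_congr rfl fun j _ => ?_
    have hj : (j : ℕ) < (e::a::b::l).length := j.isLt
    have hj' := hj; simp only [List.length_cons] at hj'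
    have hh : ((e :: a :: b :: l).eraseIdx j).length ≤ l.length + 2 := by
      rw [List.length_eraseIdx]; simp only [List.length_cons]; split <;> omega
    rw [pfAux_eq_pfaffian _ _ hh, List.get_eq_getElem, nth,
      List.getD_eq_getElem _ _ hj]

lemma sum_pair_cancel {a : ℕ} (f : ℕ → ℕ → R)
    (hc : ∀ j i, i ≤ j → j + 1 < a → f (j + 1) i + f i j = 0) :
    ∑ j ∈ range a, ∑ i ∈ range (a - 1), f j i = 0 := by
  rw [← Finset.sum_product']
  refine Finset.sum_involution
    (fun p _ => if p.2 < p.1 then (p.2, p.1 - 1) else (p.2 + 1, p.1)) ?_ ?_ ?_ ?_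
  · rintro ⟨j, i⟩ hp
    simp only [Finset.mem_product, Finset.mem_range] at hp
    dsimp only
    by_cases hlt : i < j
    · rw [if_pos hlt]
      obtain ⟨j', rfl⟩ : ∃ j', j = j' + 1 := ⟨j - 1, by omega⟩
      exact hc j' i (by omega) (by omega)
    · rw [if_neg hlt]
      rw [add_comm]
      exact hc i j (by omega) (by omega)
  · rintro ⟨j, i⟩ hp hne
    dsimp only
    by_cases hlt : i < j
    · rw [if_pos hlt]; intro heq
      rw [Prod.mk.injEq] at heq; omega
    · rw [if_neg hlt]; intro heq
      rw [Prod.mk.injEq] at heq; omega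
  · rintro ⟨j, i⟩ hp
    simp only [Finset.mem_product, Finset.mem_range] at hp ⊢
    by_cases hlt : i < j
    · rw [if_pos hlt]; exact ⟨by omega, by omega⟩
    · rw [if_neg hlt]; exact ⟨by omega, by omega⟩
  · rintro ⟨j, i⟩ hp
    simp only [Finset.mem_product, Finset.mem_range] at hp
    dsimp only
    by_cases hlt : i < j
    · rw [if_pos hlt]
      have : ¬ (j - 1 < i) := by omega
      rw [if_neg this, Prod.mk.injEq]
      omega
    · rw [if_neg hlt]
      have : i + 1 > j := by omega
      rw [if_pos (by omega), Prod.mk.injEq]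
      omega

lemma key_lemma (c : ℤ → R) (r s : ℤ) (h : pf2 c c r s + pf2 c c s r = 0) :
    ∀ (n : ℕ) (L₁ L₂ : List ((ℤ → R) × ℤ)), L₁.length + L₂.length ≤ n →
      pfaffian (L₁ ++ (c, r) :: (c, s) :: L₂)
        + pfaffian (L₁ ++ (c, s) :: (c, r) :: L₂) = 0 := by
  intro n
  induction n with
  | zero =>
    intro L₁ L₂ hn
    have h1 : L₁ = [] := by
      have := Nat.le_zero.mp hn; cases L₁ <;> simp_all
    have h2 : L₂ = [] := by
      have := Nat.le_zero.mp hn; cases L₂ <;> simp_all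
    subst h1; subst h2
    exact h
  | succ n ih =>
    intro L₁ L₂ hn
    by_cases hpar : (L₁.length + L₂.length) % 2 = 1
    · -- total length odd
      set k := L₁.length with hk
      set m := L₁.length + L₂.length + 2 with hm
      set A := L₁ ++ (c, r) :: (c, s) :: L₂ with hA
      set B := L₁ ++ (c, s) :: (c, r) :: L₂ with hB
      have hAlen : A.length = m := by rw [hA]; simp; omega
      have hBlen : B.length = m := by rw [hB]; simp; omega
      rw [pf_odd A (by rw [hAlen]; omega) (by rw [hAlen]; omega),
          pf_odd B (by rw [hBlen]; omega) (by rw [hBlen]; omega), hAlen, hBlen,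
          ← Finset.sum_add_distrib]
      have key0 : ∀ j, j < m → j ≠ k → j ≠ k + 1 →
          ((-1:R)^j * (nth A j).1 (nth A j).2 * pfaffian (A.eraseIdx j)
            + (-1:R)^j * (nth B j).1 (nth B j).2 * pfaffian (B.eraseIdx j)) = 0 := by
        intro j hj hjk hjk1
        rcases lt_or_ge j k with hlt | hge
        · have e1 : nth A j = nth L₁ j := nth_append_left _ _ _ hlt
          have e2 : nth B j = nth L₁ j := nth_append_left _ _ _ hlt
          have e3 : A.eraseIdx j = L₁.eraseIdx j ++ (c, r) :: (c, s) :: L₂ :=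
            List.eraseIdx_append_of_lt_length hlt _
          have e4 : B.eraseIdx j = L₁.eraseIdx j ++ (c, s) :: (c, r) :: L₂ :=
            List.eraseIdx_append_of_lt_length hlt _
          have hIH := ih (L₁.eraseIdx j) L₂
            (by rw [List.length_eraseIdx]; split <;> omega)
          rw [e1, e2, e3, e4, ← mul_add, hIH, mul_zero]
        · obtain ⟨t, rfl⟩ : ∃ t, j = k + (t + 2) := ⟨j - k - 2, by omega⟩
          have ht : t < L₂.length := by omega
          have e1 : nth A (k + (t + 2)) = nth L₂ t := by
            rw [nth_append_right _ _ _ (by omega),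
              show k + (t + 2) - L₁.length = t + 2 from by omega]
            rfl
          have e2 : nth B (k + (t + 2)) = nth L₂ t := by
            rw [nth_append_right _ _ _ (by omega),
              show k + (t + 2) - L₁.length = t + 2 from by omega]
            rfl
          have e3 : A.eraseIdx (k + (t + 2)) = L₁ ++ (c, r) :: (c, s) :: L₂.eraseIdx t := by
            rw [hA, List.eraseIdx_append_of_length_le (by omega),
              show k + (t + 2) - L₁.length = t + 2 from by omega]
            rfl
          have e4 : B.eraseIdx (k + (t + 2)) = L₁ ++ (c, s) :: (c, r) :: L₂.eraseIdx t := by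
            rw [hB, List.eraseIdx_append_of_length_le (by omega),
              show k + (t + 2) - L₁.length = t + 2 from by omega]
            rfl
          have hIH := ih L₁ (L₂.eraseIdx t)
            (by rw [List.length_eraseIdx]; split <;> omega)
          rw [e1, e2, e3, e4, ← mul_add, hIH, mul_zero]
      have keyp : ((-1:R)^k * (nth A k).1 (nth A k).2 * pfaffian (A.eraseIdx k)
            + (-1:R)^k * (nth B k).1 (nth B k).2 * pfaffian (B.eraseIdx k))
          + ((-1:R)^(k+1) * (nth A (k+1)).1 (nth A (k+1)).2 * pfaffian (A.eraseIdx (k+1))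
            + (-1:R)^(k+1) * (nth B (k+1)).1 (nth B (k+1)).2 * pfaffian (B.eraseIdx (k+1)))
            = 0 := by
        have e1 : nth A k = (c, r) := by
          rw [nth_append_right _ _ _ (by omega), show k - L₁.length = 0 from by omega]; rfl
        have e2 : nth B k = (c, s) := by
          rw [nth_append_right _ _ _ (by omega), show k - L₁.length = 0 from by omega]; rfl
        have e3 : nth A (k+1) = (c, s) := by
          rw [nth_append_right _ _ _ (by omega), show k + 1 - L₁.length = 1 from by omega]; rfl
        have e4 : nth B (k+1) = (c, r) := by
          rw [nth_append_right _ _ _ (by omega), show k + 1 - L₁.length = 1 from by omega]; rfl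
        have e5 : A.eraseIdx k = L₁ ++ (c, s) :: L₂ := by
          rw [hA, List.eraseIdx_append_of_length_le (by omega),
            show k - L₁.length = 0 from by omega]
          rfl
        have e6 : B.eraseIdx k = L₁ ++ (c, r) :: L₂ := by
          rw [hB, List.eraseIdx_append_of_length_le (by omega),
            show k - L₁.length = 0 from by omega]
          rfl
        have e7 : A.eraseIdx (k+1) = L₁ ++ (c, r) :: L₂ := by
          rw [hA, List.eraseIdx_append_of_length_le (by omega),
            show k + 1 - L₁.length = 1 from by omega]
          rfl
        have e8 : B.eraseIdx (k+1) = L₁ ++ (c, s) :: L₂ := by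
          rw [hB, List.eraseIdx_append_of_length_le (by omega),
            show k + 1 - L₁.length = 1 from by omega]
          rfl
        rw [e1, e2, e3, e4, e5, e6, e7, e8]
        simp only [pow_succ]
        ring
      refine Finset.sum_involution
        (fun j _ => if j = k then k + 1 else if j = k + 1 then k else j) ?_ ?_ ?_ ?_
      · intro j hj
        simp only [Finset.mem_range] at hj
        beta_reduce
        rcases eq_or_ne j k with rfl | h1
        · rw [show (if k = k then k + 1 else if k = k + 1 then k else k) = k + 1 from by simp]
          exact keyp
        · rcases eq_or_ne j (k + 1) with rfl | h2
          · rw [show (if k + 1 = k then k + 1 else if k + 1 = k + 1 then k else k + 1) = k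
              from by simp]
            rw [add_comm]; exact keyp
          · rw [show (if j = k then k + 1 else if j = k + 1 then k else j) = j
              from by simp [h1, h2]]
            rw [key0 j hj h1 h2]; norm_num
      · intro j hj hne
        beta_reduce
        rcases eq_or_ne j k with rfl | h1
        · simp
        · rcases eq_or_ne j (k + 1) with rfl | h2
          · simp [h1]
          · exfalso; exact hne (key0 j (Finset.mem_range.mp hj) h1 h2)
      · intro j hj
        simp only [Finset.mem_range] at hj ⊢
        split_ifs <;> omega
      · intro j hj
        beta_reduce
        rcases eq_or_ne j k with rfl | h1
        · simp
        · rcases eq_or_ne j (k + 1) with rfl | h2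
          · simp [h1]
          · simp [h1, h2]
    · -- total length even
      rcases L₁ with _ | ⟨e, T₁⟩
      · -- L₁ = []
        rcases L₂ with _ | ⟨x, M'⟩
        · exact h
        · simp only [List.nil_append]
          set M := x :: M' with hM
          have hMe : M.length % 2 = 0 := by
            simp only [List.length_nil, Nat.zero_add] at hpar
            omega
          have hM1 : 1 ≤ M.length := by rw [hM]; simp
          have hM2 : 2 ≤ M.length := by omega
          have hexp : ∀ y z : ℤ, pfaffian ((c, y) :: (c, z) :: M)
              = pf2 c c y z * pfaffian M
                + ∑ j ∈ range M.length, ∑ i ∈ range (M.length - 1),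
                    (-1:R)^(j+1) * pf2 c (nth M j).1 y (nth M j).2 *
                      ((-1:R)^i * pf2 c (nth (M.eraseIdx j) i).1 z (nth (M.eraseIdx j) i).2 *
                        pfaffian ((M.eraseIdx j).eraseIdx i)) := by
            intro y z
            rw [pf_even (c, y) ((c, z) :: M) (by simp only [List.length_cons]; omega)]
            simp only [List.length_cons]
            rw [Finset.sum_range_succ' _ M.length]
            simp only [nth_cons_succ, nth_cons_zero, List.eraseIdx_cons_succ,
              List.eraseIdx_cons_zero, pow_zero, one_mul]
            rw [add_comm]
            congr 1
            refine Finset.sum_congr rfl fun j hj => ?_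
            simp only [Finset.mem_range] at hj
            have hlen : (M.eraseIdx j).length = M.length - 1 := by
              rw [List.length_eraseIdx, if_pos hj]
            rw [pf_even (c, z) (M.eraseIdx j) (by rw [hlen]; omega), hlen, Finset.mul_sum]
          rw [hexp r s, hexp s r]
          have hS : (∑ j ∈ range M.length, ∑ i ∈ range (M.length - 1),
                (-1:R)^(j+1) * pf2 c (nth M j).1 r (nth M j).2 *
                  ((-1:R)^i * pf2 c (nth (M.eraseIdx j) i).1 s (nth (M.eraseIdx j) i).2 *
                    pfaffian ((M.eraseIdx j).eraseIdx i)))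
              + (∑ j ∈ range M.length, ∑ i ∈ range (M.length - 1),
                (-1:R)^(j+1) * pf2 c (nth M j).1 s (nth M j).2 *
                  ((-1:R)^i * pf2 c (nth (M.eraseIdx j) i).1 r (nth (M.eraseIdx j) i).2 *
                    pfaffian ((M.eraseIdx j).eraseIdx i))) = 0 := by
            rw [← Finset.sum_add_distrib]
            have hcg : ∀ j ∈ range M.length,
                (∑ i ∈ range (M.length - 1),
                (-1:R)^(j+1) * pf2 c (nth M j).1 r (nth M j).2 *
                  ((-1:R)^i * pf2 c (nth (M.eraseIdx j) i).1 s (nth (M.eraseIdx j) i).2 *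
                    pfaffian ((M.eraseIdx j).eraseIdx i)))
                + (∑ i ∈ range (M.length - 1),
                (-1:R)^(j+1) * pf2 c (nth M j).1 s (nth M j).2 *
                  ((-1:R)^i * pf2 c (nth (M.eraseIdx j) i).1 r (nth (M.eraseIdx j) i).2 *
                    pfaffian ((M.eraseIdx j).eraseIdx i)))
                = ∑ i ∈ range (M.length - 1),
                  ((-1:R)^(j+1) * pf2 c (nth M j).1 r (nth M j).2 *
                  ((-1:R)^i * pf2 c (nth (M.eraseIdx j) i).1 s (nth (M.eraseIdx j) i).2 *
                    pfaffian ((M.eraseIdx j).eraseIdx i))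
                  + (-1:R)^(j+1) * pf2 c (nth M j).1 s (nth M j).2 *
                  ((-1:R)^i * pf2 c (nth (M.eraseIdx j) i).1 r (nth (M.eraseIdx j) i).2 *
                    pfaffian ((M.eraseIdx j).eraseIdx i))) :=
              fun j _ => Finset.sum_add_distrib.symm
            rw [Finset.sum_congr rfl hcg]
            refine sum_pair_cancel _ ?_
            intro j i hij hja
            have n1 : nth (M.eraseIdx (j+1)) i = nth M i := by
              rw [nth_eraseIdx _ _ _ (by omega), if_pos (by omega)]
            have n2 : nth (M.eraseIdx i) j = nth M (j+1) := by
              rw [nth_eraseIdx _ _ _ (by omega), if_neg (by omega)]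
            have e1 : (M.eraseIdx i).eraseIdx j = (M.eraseIdx (j+1)).eraseIdx i :=
              eraseIdx_eraseIdx M i j hij
            rw [n1, n2, e1]
            simp only [pow_succ]
            ring
          linear_combination hS + pfaffian M * h
      · -- L₁ = e :: T₁
        simp only [List.cons_append]
        simp only [List.length_cons] at hn hpar
        set t := T₁.length with ht
        set w := T₁.length + L₂.length + 2 with hw
        set NA := T₁ ++ (c, r) :: (c, s) :: L₂ with hNA
        set NB := T₁ ++ (c, s) :: (c, r) :: L₂ with hNB
        have hNAlen : NA.length = w := by rw [hNA]; simp; omega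
        have hNBlen : NB.length = w := by rw [hNB]; simp; omega
        rw [pf_even e NA (by rw [hNAlen]; omega), pf_even e NB (by rw [hNBlen]; omega),
          hNAlen, hNBlen, ← Finset.sum_add_distrib]
        have key0 : ∀ j, j < w → j ≠ t → j ≠ t + 1 →
            ((-1:R)^j * pf2 e.1 (nth NA j).1 e.2 (nth NA j).2 * pfaffian (NA.eraseIdx j)
              + (-1:R)^j * pf2 e.1 (nth NB j).1 e.2 (nth NB j).2 * pfaffian (NB.eraseIdx j))
              = 0 := by
          intro j hj hjk hjk1
          rcases lt_or_ge j t with hlt | hge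
          · have e1 : nth NA j = nth T₁ j := nth_append_left _ _ _ hlt
            have e2 : nth NB j = nth T₁ j := nth_append_left _ _ _ hlt
            have e3 : NA.eraseIdx j = T₁.eraseIdx j ++ (c, r) :: (c, s) :: L₂ :=
              List.eraseIdx_append_of_lt_length hlt _
            have e4 : NB.eraseIdx j = T₁.eraseIdx j ++ (c, s) :: (c, r) :: L₂ :=
              List.eraseIdx_append_of_lt_length hlt _
            have hIH := ih (T₁.eraseIdx j) L₂
              (by rw [List.length_eraseIdx]; split <;> omega)
            rw [e1, e2, e3, e4, ← mul_add, hIH, mul_zero]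
          · obtain ⟨u, rfl⟩ : ∃ u, j = t + (u + 2) := ⟨j - t - 2, by omega⟩
            have hu : u < L₂.length := by omega
            have e1 : nth NA (t + (u + 2)) = nth L₂ u := by
              rw [nth_append_right _ _ _ (by omega),
                show t + (u + 2) - T₁.length = u + 2 from by omega]
              rfl
            have e2 : nth NB (t + (u + 2)) = nth L₂ u := by
              rw [nth_append_right _ _ _ (by omega),
                show t + (u + 2) - T₁.length = u + 2 from by omega]
              rfl
            have e3 : NA.eraseIdx (t + (u + 2)) = T₁ ++ (c, r) :: (c, s) :: L₂.eraseIdx u := by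
              rw [hNA, List.eraseIdx_append_of_length_le (by omega),
                show t + (u + 2) - T₁.length = u + 2 from by omega]
              rfl
            have e4 : NB.eraseIdx (t + (u + 2)) = T₁ ++ (c, s) :: (c, r) :: L₂.eraseIdx u := by
              rw [hNB, List.eraseIdx_append_of_length_le (by omega),
                show t + (u + 2) - T₁.length = u + 2 from by omega]
              rfl
            have hIH := ih T₁ (L₂.eraseIdx u)
              (by rw [List.length_eraseIdx]; split <;> omega)
            rw [e1, e2, e3, e4, ← mul_add, hIH, mul_zero]
        have keyp : ((-1:R)^t * pf2 e.1 (nth NA t).1 e.2 (nth NA t).2 * pfaffian (NA.eraseIdx t)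
              + (-1:R)^t * pf2 e.1 (nth NB t).1 e.2 (nth NB t).2 * pfaffian (NB.eraseIdx t))
            + ((-1:R)^(t+1) * pf2 e.1 (nth NA (t+1)).1 e.2 (nth NA (t+1)).2
                * pfaffian (NA.eraseIdx (t+1))
              + (-1:R)^(t+1) * pf2 e.1 (nth NB (t+1)).1 e.2 (nth NB (t+1)).2
                * pfaffian (NB.eraseIdx (t+1))) = 0 := by
          have e1 : nth NA t = (c, r) := by
            rw [nth_append_right _ _ _ (by omega), show t - T₁.length = 0 from by omega]; rfl
          have e2 : nth NB t = (c, s) := by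
            rw [nth_append_right _ _ _ (by omega), show t - T₁.length = 0 from by omega]; rfl
          have e3 : nth NA (t+1) = (c, s) := by
            rw [nth_append_right _ _ _ (by omega), show t + 1 - T₁.length = 1 from by omega]; rfl
          have e4 : nth NB (t+1) = (c, r) := by
            rw [nth_append_right _ _ _ (by omega), show t + 1 - T₁.length = 1 from by omega]; rfl
          have e5 : NA.eraseIdx t = T₁ ++ (c, s) :: L₂ := by
            rw [hNA, List.eraseIdx_append_of_length_le (by omega),
              show t - T₁.length = 0 from by omega]
            rfl
          have e6 : NB.eraseIdx t = T₁ ++ (c, r) :: L₂ := by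
            rw [hNB, List.eraseIdx_append_of_length_le (by omega),
              show t - T₁.length = 0 from by omega]
            rfl
          have e7 : NA.eraseIdx (t+1) = T₁ ++ (c, r) :: L₂ := by
            rw [hNA, List.eraseIdx_append_of_length_le (by omega),
              show t + 1 - T₁.length = 1 from by omega]
            rfl
          have e8 : NB.eraseIdx (t+1) = T₁ ++ (c, s) :: L₂ := by
            rw [hNB, List.eraseIdx_append_of_length_le (by omega),
              show t + 1 - T₁.length = 1 from by omega]
            rfl
          rw [e1, e2, e3, e4, e5, e6, e7, e8]
          simp only [pow_succ]
          ring
        refine Finset.sum_involution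
          (fun j _ => if j = t then t + 1 else if j = t + 1 then t else j) ?_ ?_ ?_ ?_
        · intro j hj
          simp only [Finset.mem_range] at hj
          beta_reduce
          rcases eq_or_ne j t with rfl | h1
          · rw [show (if t = t then t + 1 else if t = t + 1 then t else t) = t + 1 from by simp]
            exact keyp
          · rcases eq_or_ne j (t + 1) with rfl | h2
            · rw [show (if t + 1 = t then t + 1 else if t + 1 = t + 1 then t else t + 1) = t
                from by simp]
              rw [add_comm]; exact keyp
            · rw [show (if j = t then t + 1 else if j = t + 1 then t else j) = j
                from by simp [h1, h2]]
              rw [key0 j hj h1 h2]; norm_num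
        · intro j hj hne
          beta_reduce
          rcases eq_or_ne j t with rfl | h1
          · simp
          · rcases eq_or_ne j (t + 1) with rfl | h2
            · simp [h1]
            · exfalso; exact hne (key0 j (Finset.mem_range.mp hj) h1 h2)
        · intro j hj
          simp only [Finset.mem_range] at hj ⊢
          split_ifs <;> omega
        · intro j hj
          beta_reduce
          rcases eq_or_ne j t with rfl | h1
          · simp
          · rcases eq_or_ne j (t + 1) with rfl | h2
            · simp [h1]
            · simp [h1, h2]



/-- Proposition 4.1(2): antisymmetry in two adjacent entries taken from the same sequence
propagates to all multi Schur-Pfaffians. -/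
theorem pfaffian_antisymm (c : ℤ → R) (r s : ℤ)
    (h : pfaffian [(c, r), (c, s)] + pfaffian [(c, s), (c, r)] = 0) :
    ∀ L₁ L₂ : List ((ℤ → R) × ℤ),
      pfaffian (L₁ ++ (c, r) :: (c, s) :: L₂)
        + pfaffian (L₁ ++ (c, s) :: (c, r) :: L₂) = 0 := by
  exact fun L₁ L₂ => key_lemma c r s h _ L₁ L₂ le_rfl

end
end
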